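/- L^p-integrability of the symbol m_α: let α > 0 and 1 ≤ p < ∞. Then ∫_{ℝ²} |m_α(ξ₁,ξ₂)|^p d(ξ₁,ξ₂) < ∞ if and only if p > 2/α + 1/2. -/

import Mathlib

open MeasureTheory

noncomputable section

/-- The symbol `m_α(ξ) = ξ₁² / (ξ₁² + ξ₂² + |ξ₁|^{α+2})` (with value `0` at the origin,
which is the value Lean's division by zero gives). -/
def mSymb (α : ℝ) (ξ : ℝ × ℝ) : ℝ :=
  ξ.1 ^ 2 / (ξ.1 ^ 2 + ξ.2 ^ 2 + |ξ.1| ^ (α + 2))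

section Aux

open Set Real

theorem mSymb_lemA (α : ℝ) (hα : 0 < α) (p : ℝ) (hp : 1 ≤ p) :
    Integrable (fun x : ℝ => |x| * (1 + |x| ^ α) ^ ((1:ℝ)/2 - p)) ↔ 2 / α + 1 / 2 < p := by
  set c : ℝ := 1 + α * (1/2 - p) with hc
  set g : ℝ → ℝ := fun x : ℝ => |x| * (1 + |x| ^ α) ^ ((1:ℝ)/2 - p) with hg
  have hmeas : Measurable g := by fun_prop
  have hgnonneg : ∀ x, 0 ≤ g x := fun x =>
    mul_nonneg (abs_nonneg x) (rpow_nonneg (by positivity) _)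
  have hexp : (1:ℝ)/2 - p ≤ 0 := by linarith
  have key : (2/α + 1/2 < p) ↔ c < -1 := by
    have h1 : 2/α + 1/2 < p ↔ 2/α < p - 1/2 := by constructor <;> intro <;> linarith
    rw [h1, div_lt_iff₀ hα, hc]
    constructor <;> intro <;> nlinarith
  -- bounds on Ioi 1
  have hub : ∀ x ∈ Ioi (1:ℝ), g x ≤ x ^ c := by
    intro x hx
    have hx1 : (1:ℝ) < x := hx
    have hx0 : (0:ℝ) < x := by linarith
    have hxa : (0:ℝ) < x ^ α := rpow_pos_of_pos hx0 α
    have h2 : (1 + x ^ α) ^ ((1:ℝ)/2 - p) ≤ (x ^ α) ^ ((1:ℝ)/2 - p) :=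
      rpow_le_rpow_of_nonpos hxa (by linarith) hexp
    have h3 : (x ^ α) ^ ((1:ℝ)/2 - p) = x ^ (α * ((1:ℝ)/2 - p)) :=
      (rpow_mul hx0.le _ _).symm
    calc g x = x * (1 + x ^ α) ^ ((1:ℝ)/2 - p) := by
          simp [hg, abs_of_pos hx0]
      _ ≤ x * (x ^ α) ^ ((1:ℝ)/2 - p) := by
          exact mul_le_mul_of_nonneg_left h2 hx0.le
      _ = x ^ c := by
          rw [h3, hc, rpow_add hx0, rpow_one]
  have hlb : ∀ x ∈ Ioi (1:ℝ), x ^ c ≤ 2 ^ (p - 1/2) * g x := by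
    intro x hx
    have hx1 : (1:ℝ) < x := hx
    have hx0 : (0:ℝ) < x := by linarith
    have hxa1 : (1:ℝ) ≤ x ^ α := one_le_rpow hx1.le hα.le
    have h2 : (2 * x ^ α) ^ ((1:ℝ)/2 - p) ≤ (1 + x ^ α) ^ ((1:ℝ)/2 - p) :=
      rpow_le_rpow_of_nonpos (by positivity) (by linarith) hexp
    have h3 : (2 * x ^ α : ℝ) ^ ((1:ℝ)/2 - p)
        = 2 ^ ((1:ℝ)/2 - p) * x ^ (α * ((1:ℝ)/2 - p)) := by
      rw [mul_rpow (by norm_num) (by positivity), ← rpow_mul hx0.le]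
    have h4 : x ^ c = x * x ^ (α * ((1:ℝ)/2 - p)) := by
      rw [hc, rpow_add hx0, rpow_one]
    have h5 : (2:ℝ) ^ (p - 1/2) * 2 ^ ((1:ℝ)/2 - p) = 1 := by
      have he : (p - 1/2) + ((1:ℝ)/2 - p) = 0 := by ring
      rw [← rpow_add (by norm_num : (0:ℝ) < 2), he, rpow_zero]
    calc x ^ c = 2 ^ (p - 1/2) * (x * (2 * x ^ α) ^ ((1:ℝ)/2 - p)) := by
          rw [h3, h4]
          have hr : (2:ℝ) ^ (p - 1/2) * (x * (2 ^ ((1:ℝ)/2 - p) * x ^ (α * ((1:ℝ)/2 - p))))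
              = ((2:ℝ) ^ (p - 1/2) * 2 ^ ((1:ℝ)/2 - p)) * (x * x ^ (α * ((1:ℝ)/2 - p))) := by
            ring
          rw [hr, h5, one_mul]
      _ ≤ 2 ^ (p - 1/2) * (x * (1 + x ^ α) ^ ((1:ℝ)/2 - p)) := by
          have := mul_le_mul_of_nonneg_left h2 hx0.le
          exact mul_le_mul_of_nonneg_left this (by positivity)
      _ = 2 ^ (p - 1/2) * g x := by simp [hg, abs_of_pos hx0]
  constructor
  · intro h
    rw [key]
    rw [← integrableOn_Ioi_rpow_iff (zero_lt_one)]
    have h1 : IntegrableOn (fun x => 2 ^ (p - 1/2) * g x) (Ioi 1) :=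
      (h.integrableOn).const_mul _
    refine h1.mono' (by fun_prop) ?_
    rw [ae_restrict_iff' measurableSet_Ioi]
    filter_upwards with x hx
    have hx0 : (0:ℝ) ≤ x := by have := mem_Ioi.mp hx; linarith
    rw [Real.norm_eq_abs, abs_of_nonneg (rpow_nonneg hx0 _)]
    exact hlb x hx
  · intro h
    rw [key] at h
    have hIoi : IntegrableOn g (Ioi 1) := by
      have hrp : IntegrableOn (fun x : ℝ => x ^ c) (Ioi 1) :=
        (integrableOn_Ioi_rpow_iff zero_lt_one).mpr h
      refine hrp.mono' (hmeas.aestronglyMeasurable.restrict) ?_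
      rw [ae_restrict_iff' measurableSet_Ioi]
      filter_upwards with x hx
      rw [Real.norm_eq_abs, abs_of_nonneg (hgnonneg x)]
      exact hub x hx
    have hmid : IntegrableOn g (Icc (-1:ℝ) 1) := by
      refine Integrable.mono' (g := fun _ => (1:ℝ)) ?_ hmeas.aestronglyMeasurable.restrict ?_
      · exact (integrableOn_const measure_Icc_lt_top.ne)
      · rw [ae_restrict_iff' measurableSet_Icc]
        filter_upwards with x hx
        rw [Real.norm_eq_abs, abs_of_nonneg (hgnonneg x)]
        have hx1 : |x| ≤ 1 := abs_le.mpr ⟨hx.1, hx.2⟩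
        have h2 : (1 + |x| ^ α) ^ ((1:ℝ)/2 - p) ≤ 1 :=
          rpow_le_one_of_one_le_of_nonpos (le_add_of_nonneg_right (rpow_nonneg (abs_nonneg x) α)) hexp
        calc g x ≤ 1 * 1 := mul_le_mul hx1 h2 (rpow_nonneg (by positivity) _) zero_le_one
          _ = 1 := one_mul 1
    have hneg : IntegrableOn g (Iio (-1:ℝ)) := by
      have h_map : (volume.restrict (Ioi (1:ℝ))).map Neg.neg = volume.restrict (Iio (-1:ℝ)) := by
        have hset : Neg.neg ⁻¹' (Iio (-1:ℝ)) = Ioi 1 := by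
          ext x
          simp only [mem_preimage, mem_Iio, mem_Ioi]
          constructor <;> intro <;> linarith
        conv => rhs; rw [← Measure.map_neg_eq_self (volume : Measure ℝ),
          measurableEmbedding_neg.restrict_map, hset]
      rw [IntegrableOn, ← h_map, measurableEmbedding_neg.integrable_map_iff]
      have : g ∘ Neg.neg = g := by
        funext x
        show g (-x) = g x
        have : |(-x)| = |x| := abs_neg x
        rw [hg]
        beta_reduce
        rw [this]
      rw [this]
      exact hIoi
    rw [← integrableOn_univ, ← Iio_union_Ici (a := (-1:ℝ)), integrableOn_union]
    refine ⟨hneg, ?_⟩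
    rw [← Icc_union_Ioi_eq_Ici (by norm_num : (-1:ℝ) ≤ 1), integrableOn_union]
    exact ⟨hmid, hIoi⟩

theorem mSymb_lemC (p : ℝ) (hp : 1 ≤ p) : Integrable (fun u : ℝ => (1 + u ^ 2) ^ (-p)) := by
  refine integrable_inv_one_add_sq.mono' (by fun_prop : Measurable fun u : ℝ => (1 + u ^ 2) ^ (-p)).aestronglyMeasurable ?_
  filter_upwards with u
  have h1 : (1:ℝ) ≤ 1 + u ^ 2 := by nlinarith
  rw [Real.norm_eq_abs, abs_of_nonneg (rpow_nonneg (by positivity) _)]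
  calc (1 + u^2) ^ (-p) ≤ (1 + u^2) ^ (-1:ℝ) :=
        rpow_le_rpow_of_exponent_le h1 (by linarith)
    _ = (1 + u^2)⁻¹ := by rw [rpow_neg_one]

theorem mSymb_lemCpos (p : ℝ) (hp : 1 ≤ p) : 0 < ∫ u : ℝ, (1 + u ^ 2) ^ (-p) := by
  rw [integral_pos_iff_support_of_nonneg (fun u => rpow_nonneg (by positivity) _) (mSymb_lemC p hp)]
  have : Function.support (fun u : ℝ => (1 + u ^ 2) ^ (-p)) = Set.univ := by
    ext u
    simp only [Function.mem_support, mem_univ, iff_true]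
    exact (rpow_pos_of_pos (by positivity) _).ne'
  rw [this]
  simp

theorem mSymb_lemB (p A : ℝ) (hA : 0 < A) (hp : 1 ≤ p) :
    Integrable (fun y : ℝ => (A + y ^ 2) ^ (-p)) ∧
    ∫ y : ℝ, (A + y ^ 2) ^ (-p) = A ^ ((1:ℝ)/2 - p) * ∫ u : ℝ, (1 + u ^ 2) ^ (-p) := by
  have hC := mSymb_lemC p hp
  set b : ℝ := Real.sqrt A with hb
  have hb0 : 0 < b := Real.sqrt_pos.mpr hA
  have hbsq : b ^ 2 = A := Real.sq_sqrt hA.le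
  have hpt : ∀ y : ℝ, (A + y ^ 2) ^ (-p) = A ^ (-p) * (1 + (b⁻¹ * y) ^ 2) ^ (-p) := by
    intro y
    have h1 : A + y ^ 2 = A * (1 + (b⁻¹ * y) ^ 2) := by
      field_simp
      rw [hbsq]; ring
    rw [h1, mul_rpow hA.le (by positivity)]
  have heq : (fun y : ℝ => (A + y ^ 2) ^ (-p))
      = fun y : ℝ => A ^ (-p) * (1 + (b⁻¹ * y) ^ 2) ^ (-p) := funext hpt
  constructor
  · rw [heq]
    exact (hC.comp_mul_left' (inv_ne_zero hb0.ne')).const_mul _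
  · rw [heq, integral_const_mul, Measure.integral_comp_inv_mul_left
      (fun u : ℝ => (1 + u ^ 2) ^ (-p)) b, abs_of_pos hb0, smul_eq_mul, ← mul_assoc]
    congr 1
    rw [hb, sqrt_eq_rpow, ← rpow_add hA]
    congr 1
    ring

/-- pointwise formula for fixed nonzero first coordinate -/
theorem mSymb_pointwise (α p x y : ℝ) (hx : x ≠ 0) :
    |mSymb α (x, y)| ^ p
      = (x ^ 2) ^ p * ((x ^ 2 + |x| ^ (α + 2)) + y ^ 2) ^ (-p) := by
  have hx2 : (0:ℝ) < x ^ 2 := pow_two_pos_of_ne_zero hx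
  have hD : (0:ℝ) < x ^ 2 + y ^ 2 + |x| ^ (α + 2) := by
    have := rpow_nonneg (abs_nonneg x) (α + 2)
    nlinarith
  have hm : mSymb α (x, y) = x ^ 2 / (x ^ 2 + y ^ 2 + |x| ^ (α + 2)) := rfl
  have hnn : 0 ≤ mSymb α (x, y) := by rw [hm]; positivity
  rw [abs_of_nonneg hnn, hm, div_rpow hx2.le hD.le,
    show (x ^ 2 + |x| ^ (α + 2)) + y ^ 2 = x ^ 2 + y ^ 2 + |x| ^ (α + 2) by ring,
    rpow_neg hD.le, div_eq_mul_inv]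

theorem mSymb_outer (α p x : ℝ) (hx : x ≠ 0) :
    (x ^ 2 : ℝ) ^ p * (x ^ 2 + |x| ^ (α + 2)) ^ ((1:ℝ)/2 - p)
      = |x| * (1 + |x| ^ α) ^ ((1:ℝ)/2 - p) := by
  have hx2 : (0:ℝ) < x ^ 2 := pow_two_pos_of_ne_zero hx
  have habs : (0:ℝ) < |x| := abs_pos.mpr hx
  have h2 : |x| ^ (2:ℝ) = x ^ 2 := by
    rw [show (2:ℝ) = ((2:ℕ):ℝ) by norm_num, rpow_natCast, sq_abs]
  have hA : x ^ 2 + |x| ^ (α + 2) = x ^ 2 * (1 + |x| ^ α) := by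
    rw [rpow_add habs, h2]; ring
  rw [hA, mul_rpow hx2.le (by positivity), ← mul_assoc, ← rpow_add hx2,
    show p + ((1:ℝ)/2 - p) = 1/2 by ring]
  congr 1
  rw [show (1:ℝ)/2 = (1/2:ℝ) by norm_num, ← sqrt_eq_rpow, sqrt_sq_eq_abs]

end Aux

/-- **`L^p`-integrability of the symbol `m_α`** (Lemma 3.3): for `α > 0` and `1 ≤ p < ∞`,
`m_α ∈ L^p(ℝ²)` if and only if `p > 2/α + 1/2`. -/
theorem mSymb_memLp_iff (α : ℝ) (hα : 0 < α) (p : ℝ) (hp : 1 ≤ p) :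
    Integrable (fun ξ : ℝ × ℝ => |mSymb α ξ| ^ p) (volume : Measure (ℝ × ℝ)) ↔
      2 / α + 1 / 2 < p := by
  classical
  set C : ℝ := ∫ u : ℝ, (1 + u ^ 2) ^ (-p) with hCdef
  have hC0 : 0 < C := mSymb_lemCpos p hp
  set g : ℝ → ℝ := fun x => |x| * (1 + |x| ^ α) ^ ((1:ℝ)/2 - p) with hg
  set F : ℝ × ℝ → ℝ := fun ξ => |mSymb α ξ| ^ p with hF
  have hFmeas : Measurable F := by
    have : Measurable (mSymb α) := by unfold mSymb; fun_prop
    fun_prop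
  have hFnn : ∀ ξ, 0 ≤ F ξ := fun ξ => Real.rpow_nonneg (abs_nonneg _) p
  have hgmeas : Measurable g := by fun_prop
  have hgnn : ∀ x, 0 ≤ g x := fun x =>
    mul_nonneg (abs_nonneg x) (Real.rpow_nonneg (by positivity) _)
  -- Step 1 : reduce to lintegral
  have step1 : Integrable F (volume : Measure (ℝ × ℝ)) ↔
      (∫⁻ ξ : ℝ × ℝ, ENNReal.ofReal (F ξ)) < ⊤ := by
    constructor
    · intro h
      exact (hasFiniteIntegral_iff_ofReal (Filter.Eventually.of_forall hFnn)).mp h.2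
    · intro h
      exact ⟨hFmeas.aestronglyMeasurable,
        (hasFiniteIntegral_iff_ofReal (Filter.Eventually.of_forall hFnn)).mpr h⟩
  -- Step 2 : Tonelli
  have step2 : (∫⁻ ξ : ℝ × ℝ, ENNReal.ofReal (F ξ))
      = ∫⁻ x : ℝ, ∫⁻ y : ℝ, ENNReal.ofReal (F (x, y)) := by
    rw [MeasureTheory.Measure.volume_eq_prod ℝ ℝ]
    exact MeasureTheory.lintegral_prod _
      (ENNReal.measurable_ofReal.comp hFmeas).aemeasurable
  -- Step 3 : inner integral, a.e. x
  have hx0ae : ∀ᵐ x : ℝ, x ≠ 0 := by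
    rw [MeasureTheory.ae_iff]
    simp only [ne_eq, not_not, Set.setOf_eq_eq_singleton]
    exact measure_singleton 0
  have step3 : ∀ᵐ x : ℝ, (∫⁻ y : ℝ, ENNReal.ofReal (F (x, y)))
      = ENNReal.ofReal (C * g x) := by
    filter_upwards [hx0ae] with x hx
    set A : ℝ := x ^ 2 + |x| ^ (α + 2) with hA
    have hA0 : 0 < A :=
      add_pos_of_pos_of_nonneg (pow_two_pos_of_ne_zero hx)
        (Real.rpow_nonneg (abs_nonneg x) _)
    obtain ⟨hint, hval⟩ := mSymb_lemB p A hA0 hp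
    have hpt : ∀ y : ℝ, F (x, y) = (x ^ 2) ^ p * (A + y ^ 2) ^ (-p) := fun y =>
      mSymb_pointwise α p x y hx
    calc (∫⁻ y : ℝ, ENNReal.ofReal (F (x, y)))
        = ∫⁻ y : ℝ, ENNReal.ofReal ((x ^ 2) ^ p * (A + y ^ 2) ^ (-p)) := by
          refine lintegral_congr fun y => by rw [hpt y]
      _ = ENNReal.ofReal (∫ y : ℝ, (x ^ 2) ^ p * (A + y ^ 2) ^ (-p)) := by
          refine (ofReal_integral_eq_lintegral_ofReal (hint.const_mul _) ?_).symm
          filter_upwards with y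
          exact mul_nonneg (Real.rpow_nonneg (by positivity) _)
            (Real.rpow_nonneg (add_nonneg hA0.le (sq_nonneg y)) _)
      _ = ENNReal.ofReal (C * g x) := by
          rw [integral_const_mul, hval, ← hCdef]
          congr 1
          rw [← mul_assoc, mSymb_outer α p x hx, hg]
          ring
  -- Step 4 : conclude
  rw [step1, step2, lintegral_congr_ae step3]
  have step4 : (∫⁻ x : ℝ, ENNReal.ofReal (C * g x)) < ⊤ ↔
      Integrable (fun x : ℝ => C * g x) := by
    constructor
    · intro h
      exact ⟨((hgmeas.const_mul C).aestronglyMeasurable),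
        (hasFiniteIntegral_iff_ofReal (Filter.Eventually.of_forall fun x =>
          mul_nonneg hC0.le (hgnn x))).mpr h⟩
    · intro h
      exact (hasFiniteIntegral_iff_ofReal (Filter.Eventually.of_forall fun x =>
        mul_nonneg hC0.le (hgnn x))).mp h.2
  rw [step4, integrable_const_mul_iff (isUnit_iff_ne_zero.mpr hC0.ne') g]
  exact mSymb_lemA α hα p hp

end
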